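/- Let k = ⌊(n+1)/2⌋ and let a_1, …, a_k be real numbers. If the operator φ = exp(a_1·D + a_2·D^3 + ⋯ + a_k·D^{2k−1}) maps the single polynomial γ_n(t) = C(t+n, n) = (t+1)(t+2)⋯(t+n)/n! to an integer-valued polynomial (an element of M_n), then φ maps the whole lattice M_n into itself (and in fact bijectively onto itself). -/
import Mathlib


open Polynomial

/-- `V n`: the real vector space of polynomials in `ℝ[t]` of degree at most `n`. -/
noncomputable def V (n : ℕ) : Submodule ℝ ℝ[X] := Polynomial.degreeLT ℝ (n + 1)

/-- Differentiation `D : V_n → V_n`. -/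
noncomputable def Dop (n : ℕ) : Module.End ℝ (V n) :=
  (Polynomial.derivative (R := ℝ)).restrict (p := V n) (q := V n) fun p hp => by
    rw [V, Polynomial.mem_degreeLT] at hp ⊢
    exact lt_of_le_of_lt Polynomial.degree_derivative_le hp

/-- `γ_m(t) = (t+1)(t+2)⋯(t+m)/m!`. -/
noncomputable def gam (m : ℕ) : ℝ[X] :=
  Polynomial.C ((m.factorial : ℝ))⁻¹ *
    ∏ i ∈ Finset.range m, (Polynomial.X + Polynomial.C (i + 1 : ℝ))

/-- `χ` is the Euler form: the (unique) bilinear form on `V n` with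
`χ(γ_n(t+i), γ_n(t+j)) = C(n+j-i, n)` for `0 ≤ i, j ≤ n` (binomial coefficient,
equal to `0` when `n+j-i < n`). -/
def EulerCond (n : ℕ) (χ : ↥(V n) →ₗ[ℝ] ↥(V n) →ₗ[ℝ] ℝ) : Prop :=
  ∀ (i j : Fin (n + 1)) (f g : V n),
    (f : ℝ[X]) = (gam n).comp (Polynomial.X + Polynomial.C ((i : ℕ) : ℝ)) →
    (g : ℝ[X]) = (gam n).comp (Polynomial.X + Polynomial.C ((j : ℕ) : ℝ)) →
    χ f g = ((n + (j : ℕ) - (i : ℕ)).choose n : ℝ)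

/-- The exponential of an endomorphism of `V n`. Since the endomorphisms we apply it
to are sums of positive powers of `D`, which satisfies `D^(n+1) = 0` on `V n`, the
series truncated at degree `n` equals the full exponential. -/
noncomputable def expE (n : ℕ) (N : Module.End ℝ (V n)) : Module.End ℝ (V n) :=
  ∑ j ∈ Finset.range (n + 1), ((j.factorial : ℝ))⁻¹ • N ^ j

/-- The lattice `M n` of integer-valued polynomials, as a subset of `V n`. -/
def MsetV (n : ℕ) : Set (V n) :=
  {f | ∀ m : ℤ, ∃ z : ℤ, (f : ℝ[X]).eval (m : ℝ) = (z : ℝ)}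

/-! ### Auxiliary development -/

namespace S13

open Finset

/-- Derivative as an endomorphism of `ℝ[X]`. -/
noncomputable def dL : Module.End ℝ ℝ[X] := Polynomial.derivative

/-- The nilpotent operator at the polynomial level. -/
noncomputable def Np (n : ℕ) (a : Fin ((n + 1) / 2) → ℝ) : Module.End ℝ ℝ[X] :=
  ∑ i : Fin ((n + 1) / 2), a i • dL ^ (2 * (i : ℕ) + 1)

/-- The exponential at the polynomial level. -/
noncomputable def Phi (n : ℕ) (a : Fin ((n + 1) / 2) → ℝ) : Module.End ℝ ℝ[X] :=
  ∑ j ∈ Finset.range (n + 1), ((j.factorial : ℝ))⁻¹ • Np n a ^ j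

/-- Integer valued polynomials at the polynomial level. -/
def Mp : Set ℝ[X] := {f | ∀ m : ℤ, ∃ z : ℤ, f.eval (m : ℝ) = (z : ℝ)}

/-- Finite difference operator. -/
noncomputable def Δ (f : ℝ[X]) : ℝ[X] := f.comp (X + C 1) - f

/-- binomial polynomial `C(t, j)`. -/
noncomputable def bin (j : ℕ) : ℝ[X] := (gam j).comp (X + C (-(j : ℝ)))

variable {n : ℕ} {a : Fin ((n + 1) / 2) → ℝ}

/- ## Coercion lemmas -/

lemma coe_Dop (f : V n) : ((Dop n f : ℝ[X])) = dL (f : ℝ[X]) := rfl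

lemma coe_Dop_pow (k : ℕ) (f : V n) :
    (((Dop n ^ k) f : ℝ[X])) = (dL ^ k) (f : ℝ[X]) := by
  induction k generalizing f with
  | zero => simp
  | succ k ih =>
    rw [pow_succ, pow_succ, Module.End.mul_apply, Module.End.mul_apply, ih, coe_Dop]

lemma coe_N (f : V n) :
    (((∑ i : Fin ((n + 1) / 2), a i • Dop n ^ (2 * (i : ℕ) + 1)) f : ℝ[X]))
      = Np n a (f : ℝ[X]) := by
  simp [Np, LinearMap.sum_apply, LinearMap.smul_apply, coe_Dop_pow]

lemma coe_N_pow (j : ℕ) (f : V n) :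
    ((((∑ i : Fin ((n + 1) / 2), a i • Dop n ^ (2 * (i : ℕ) + 1)) ^ j) f : ℝ[X]))
      = (Np n a ^ j) (f : ℝ[X]) := by
  induction j generalizing f with
  | zero => simp
  | succ j ih =>
    rw [pow_succ, pow_succ, Module.End.mul_apply, Module.End.mul_apply, ih, coe_N]

lemma coe_E (f : V n) :
    ((expE n (∑ i : Fin ((n + 1) / 2), a i • Dop n ^ (2 * (i : ℕ) + 1)) f : ℝ[X]))
      = Phi n a (f : ℝ[X]) := by
  simp [expE, Phi, LinearMap.sum_apply, LinearMap.smul_apply, coe_N_pow]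

/- ## Commutation with shifts -/

lemma finset_sum_comp {ι : Type*} (s : Finset ι) (p : ι → ℝ[X]) (q : ℝ[X]) :
    (∑ i ∈ s, p i).comp q = ∑ i ∈ s, (p i).comp q := by
  simp [Polynomial.comp, Polynomial.eval₂_finset_sum]

lemma dL_comp (f : ℝ[X]) (r : ℝ) :
    dL (f.comp (X + C r)) = (dL f).comp (X + C r) := by
  simp [dL, Polynomial.derivative_comp]

lemma dL_pow_comp (k : ℕ) (f : ℝ[X]) (r : ℝ) :
    (dL ^ k) (f.comp (X + C r)) = ((dL ^ k) f).comp (X + C r) := by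
  induction k generalizing f with
  | zero => simp
  | succ k ih =>
    rw [pow_succ', Module.End.mul_apply, Module.End.mul_apply, ih, dL_comp]

lemma Np_comp (f : ℝ[X]) (r : ℝ) :
    Np n a (f.comp (X + C r)) = (Np n a f).comp (X + C r) := by
  simp only [Np, LinearMap.sum_apply, LinearMap.smul_apply, dL_pow_comp,
    finset_sum_comp, Polynomial.smul_comp]

lemma Np_pow_comp (j : ℕ) (f : ℝ[X]) (r : ℝ) :
    (Np n a ^ j) (f.comp (X + C r)) = ((Np n a ^ j) f).comp (X + C r) := by
  induction j generalizing f with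
  | zero => simp
  | succ j ih =>
    rw [pow_succ', Module.End.mul_apply, Module.End.mul_apply, ih, Np_comp]

lemma Phi_comp (f : ℝ[X]) (r : ℝ) :
    Phi n a (f.comp (X + C r)) = (Phi n a f).comp (X + C r) := by
  simp only [Phi, LinearMap.sum_apply, LinearMap.smul_apply, Np_pow_comp,
    finset_sum_comp, Polynomial.smul_comp]

lemma Phi_Δ (f : ℝ[X]) : Phi n a (Δ f) = Δ (Phi n a f) := by
  rw [Δ, Δ, map_sub, Phi_comp]

lemma Phi_Δ_iter (k : ℕ) (f : ℝ[X]) : Phi n a (Δ^[k] f) = Δ^[k] (Phi n a f) := by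
  induction k generalizing f with
  | zero => simp
  | succ k ih => rw [Function.iterate_succ_apply', Function.iterate_succ_apply', Phi_Δ, ih]

/- ## Degree lemmas -/

lemma degree_dL_pow_lt (k : ℕ) (f : ℝ[X]) (hf : f ≠ 0) :
    ((dL ^ (k + 1)) f).degree < f.degree := by
  induction k with
  | zero => simpa [dL] using Polynomial.degree_derivative_lt hf
  | succ k ih =>
    rw [pow_succ', Module.End.mul_apply]
    exact lt_of_le_of_lt (Polynomial.degree_derivative_le) ih

lemma degree_Np_lt {f g : ℝ[X]} (hf : f ≠ 0) (hg : g.degree ≤ f.degree) :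
    (Np n a g).degree < f.degree := by
  have hbot : (⊥ : WithBot ℕ) < f.degree := by
    simpa [bot_lt_iff_ne_bot, Polynomial.degree_eq_bot] using hf
  simp only [Np, LinearMap.sum_apply, LinearMap.smul_apply]
  refine lt_of_le_of_lt (Polynomial.degree_sum_le _ _) ?_
  rw [Finset.sup_lt_iff hbot]
  intro i _
  refine lt_of_le_of_lt (Polynomial.degree_smul_le _ _) ?_
  rcases eq_or_ne g 0 with hg0 | hg0
  · simpa [hg0] using hbot
  · exact lt_of_lt_of_le (lt_of_lt_of_le (degree_dL_pow_lt _ g hg0) hg) le_rfl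

lemma degree_Np_pow_lt (j : ℕ) {f : ℝ[X]} (hf : f ≠ 0) :
    ((Np n a ^ (j + 1)) f).degree < f.degree := by
  induction j with
  | zero => simpa using degree_Np_lt (a := a) hf le_rfl
  | succ j ih =>
    rw [pow_succ', Module.End.mul_apply]
    exact degree_Np_lt hf (le_of_lt (by simpa using ih))

lemma degree_Phi_sub_lt {f : ℝ[X]} (hf : f ≠ 0) :
    (Phi n a f - f).degree < f.degree := by
  have hbot : (⊥ : WithBot ℕ) < f.degree := by
    simpa [bot_lt_iff_ne_bot, Polynomial.degree_eq_bot] using hf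
  have : Phi n a f = (∑ j ∈ Finset.range n,
      (((j + 1).factorial : ℝ))⁻¹ • (Np n a ^ (j + 1)) f) + f := by
    simp only [Phi, LinearMap.sum_apply, LinearMap.smul_apply]
    rw [Finset.sum_range_succ']
    simp
  rw [this, add_sub_cancel_right]
  refine lt_of_le_of_lt (Polynomial.degree_sum_le _ _) ?_
  rw [Finset.sup_lt_iff hbot]
  intro j _
  exact lt_of_le_of_lt (Polynomial.degree_smul_le _ _) (degree_Np_pow_lt j hf)

/- ## Mp closure lemmas -/

lemma Mp_zero : (0 : ℝ[X]) ∈ Mp := fun m => ⟨0, by simp⟩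

lemma Mp_sub {f g : ℝ[X]} (hf : f ∈ Mp) (hg : g ∈ Mp) : f - g ∈ Mp := by
  intro m
  obtain ⟨z1, h1⟩ := hf m
  obtain ⟨z2, h2⟩ := hg m
  exact ⟨z1 - z2, by push_cast; simp [Polynomial.eval_sub, h1, h2]⟩

lemma Mp_zsmul {f : ℝ[X]} (hf : f ∈ Mp) (z : ℤ) : (z : ℝ) • f ∈ Mp := by
  intro m
  obtain ⟨w, hw⟩ := hf m
  exact ⟨z * w, by push_cast [Polynomial.eval_smul, smul_eq_mul, hw]; ring⟩

lemma Mp_sum {ι : Type*} (s : Finset ι) (p : ι → ℝ[X]) (hp : ∀ i ∈ s, p i ∈ Mp) :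
    (∑ i ∈ s, p i) ∈ Mp := by
  intro m
  choose z hz using fun i (hi : i ∈ s) => hp i hi m
  refine ⟨∑ i ∈ s.attach, z i i.2, ?_⟩
  rw [Polynomial.eval_finset_sum, ← Finset.sum_attach s]
  push_cast
  exact Finset.sum_congr rfl fun i _ => hz i i.2

lemma Mp_comp_int {f : ℝ[X]} (hf : f ∈ Mp) (c : ℤ) : f.comp (X + C (c : ℝ)) ∈ Mp := by
  intro m
  obtain ⟨z, hz⟩ := hf (m + c)
  refine ⟨z, ?_⟩
  rw [Polynomial.eval_comp]
  simpa [Int.cast_add] using hz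

lemma Mp_Δ {f : ℝ[X]} (hf : f ∈ Mp) : Δ f ∈ Mp := by
  have h1 : f.comp (X + C ((1 : ℤ) : ℝ)) ∈ Mp := Mp_comp_int hf 1
  simpa [Δ] using Mp_sub (by simpa using h1) hf

lemma Mp_Δ_iter {f : ℝ[X]} (hf : f ∈ Mp) (k : ℕ) : Δ^[k] f ∈ Mp := by
  induction k with
  | zero => simpa
  | succ k ih => rw [Function.iterate_succ_apply']; exact Mp_Δ ih

/- ## gam and Pascal -/

lemma gam_eval (m : ℕ) (x : ℝ) :
    (gam m).eval x = ((m.factorial : ℝ))⁻¹ * ∏ i ∈ Finset.range m, (x + (i + 1)) := by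
  simp [gam, Polynomial.eval_prod]

lemma pascal (m : ℕ) (x : ℝ) :
    (gam (m + 1)).eval (x + 1) - (gam (m + 1)).eval x = (gam m).eval (x + 1) := by
  have hfac : ((m.factorial : ℝ)) ≠ 0 := Nat.cast_ne_zero.mpr m.factorial_ne_zero
  have hfac1 : (((m + 1).factorial : ℝ)) ≠ 0 := Nat.cast_ne_zero.mpr (m + 1).factorial_ne_zero
  rw [gam_eval, gam_eval, gam_eval]
  have e1 : ∏ i ∈ Finset.range (m + 1), (x + 1 + (i + 1))
      = (∏ i ∈ Finset.range m, (x + 1 + (i + 1))) * (x + 1 + (m + 1)) := by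
    rw [Finset.prod_range_succ]
  have e2 : ∏ i ∈ Finset.range (m + 1), (x + (i + 1))
      = (∏ i ∈ Finset.range m, (x + (i + 1 + 1))) * (x + (0 + 1)) := by
    rw [Finset.prod_range_succ']
    congr 1
    · exact Finset.prod_congr rfl fun i _ => by push_cast; ring
    · norm_num
  have e3 : ∏ i ∈ Finset.range m, (x + ((i : ℝ) + 1 + 1))
      = ∏ i ∈ Finset.range m, (x + 1 + (i + 1)) := by
    refine Finset.prod_congr rfl fun i _ => by ring
  rw [e1, e2, e3]
  have hfs : (((m + 1).factorial : ℝ)) = (m + 1) * (m.factorial : ℝ) := by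
    rw [Nat.factorial_succ]; push_cast; ring
  rw [hfs]
  field_simp
  ring

lemma Δ_gam_comp (m : ℕ) (r : ℝ) :
    Δ ((gam (m + 1)).comp (X + C r)) = (gam m).comp (X + C (r + 1)) := by
  apply Polynomial.funext
  intro x
  simp only [Δ, Polynomial.eval_sub, Polynomial.eval_comp, Polynomial.eval_add,
    Polynomial.eval_X, Polynomial.eval_C]
  have := pascal m (x + r)
  calc (gam (m + 1)).eval (x + 1 + r) - (gam (m + 1)).eval (x + r)
      = (gam (m + 1)).eval ((x + r) + 1) - (gam (m + 1)).eval (x + r) := by ring_nf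
    _ = (gam m).eval ((x + r) + 1) := pascal m (x + r)
    _ = (gam m).eval (x + (r + 1)) := by ring_nf

lemma gam_comp_zero (m : ℕ) : (gam m).comp (X + C (0 : ℝ)) = gam m := by
  simp

lemma Δ_iter_gam {k : ℕ} (hk : k ≤ n) :
    Δ^[k] (gam n) = (gam (n - k)).comp (X + C (k : ℝ)) := by
  induction k with
  | zero => simpa using (gam_comp_zero n).symm
  | succ k ih =>
    have hk' : k ≤ n := Nat.le_of_succ_le hk
    have hnk : n - k = (n - (k + 1)) + 1 := by omega
    rw [Function.iterate_succ_apply', ih hk', hnk, Δ_gam_comp]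
    push_cast
    ring_nf

lemma bin_eq {j : ℕ} (hj : j ≤ n) :
    bin j = (Δ^[n - j] (gam n)).comp (X + C (-(n : ℝ))) := by
  rw [Δ_iter_gam (Nat.sub_le n j), Polynomial.comp_assoc]
  have hnnj : n - (n - j) = j := by omega
  have : (X + C ((↑(n - j) : ℝ))).comp (X + C (-(n : ℝ)))
      = X + C (-(j : ℝ)) := by
    have hc : ((n - j : ℕ) : ℝ) = (n : ℝ) - (j : ℝ) := by
      push_cast [hj]; ring
    simp [Polynomial.add_comp, hc]
    ring
  rw [hnnj, this, bin]

lemma Δ_bin (j : ℕ) : Δ (bin (j + 1)) = bin j := by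
  rw [bin, Δ_gam_comp, bin]
  norm_num

lemma bin_zero : bin 0 = 1 := by
  simp [bin, gam]

lemma Δ_bin_zero : Δ (bin 0) = 0 := by
  simp [bin_zero, Δ]

lemma bin_eval_zero_succ (j : ℕ) : (bin (j + 1)).eval 0 = 0 := by
  rw [bin]
  simp only [Polynomial.eval_comp, Polynomial.eval_add, Polynomial.eval_X, Polynomial.eval_C,
    zero_add, gam_eval]
  have : ∏ i ∈ Finset.range (j + 1), (-((j : ℝ) + 1) + ((i : ℝ) + 1)) = 0 := by
    refine Finset.prod_eq_zero (Finset.self_mem_range_succ j) ?_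
    push_cast
    ring
  rw [show (-(((j + 1 : ℕ)) : ℝ)) = -((j : ℝ) + 1) by push_cast; ring, this, mul_zero]

/- ## Degree of Δ and Newton expansion -/

lemma comp_shift_cancel (f : ℝ[X]) (r : ℝ) :
    (f.comp (X + C r)).comp (X + C (-r)) = f := by
  rw [Polynomial.comp_assoc]
  have : (X + C r).comp (X + C (-r)) = X := by
    simp [Polynomial.add_comp]
  rw [this, Polynomial.comp_X]

lemma degree_comp_shift (f : ℝ[X]) (hf : f ≠ 0) (r : ℝ) :
    (f.comp (X + C r)).degree = f.degree := by
  have hc : f.comp (X + C r) ≠ 0 := by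
    intro h0
    have := comp_shift_cancel f r
    rw [h0, Polynomial.zero_comp] at this
    exact hf this.symm
  have hnd : (f.comp (X + C r)).natDegree = f.natDegree := by
    rw [Polynomial.natDegree_comp, Polynomial.natDegree_X_add_C, mul_one]
  rw [Polynomial.degree_eq_natDegree hc, Polynomial.degree_eq_natDegree hf, hnd]

lemma degree_Δ_lt {f : ℝ[X]} (hf : f ≠ 0) : (Δ f).degree < f.degree := by
  have hc : f.comp (X + C (1 : ℝ)) ≠ 0 := by
    intro h0
    have := comp_shift_cancel f 1
    rw [h0, Polynomial.zero_comp] at this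
    exact hf this.symm
  have hdeg := degree_comp_shift f hf 1
  have hlc : (f.comp (X + C (1 : ℝ))).leadingCoeff = f.leadingCoeff := by
    rw [Polynomial.leadingCoeff_comp (by rw [Polynomial.natDegree_X_add_C]; exact one_ne_zero)]
    have h1 : (X + C (1 : ℝ)).leadingCoeff = 1 := Polynomial.monic_X_add_C 1
    rw [h1, one_pow, mul_one]
  have h2 := Polynomial.degree_sub_lt hdeg hc hlc
  rw [hdeg] at h2
  exact h2

lemma degree_le_of_lt_succ {p : ℝ[X]} {m : ℕ} (h : p.degree < ((m + 1 : ℕ) : WithBot ℕ)) :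
    p.degree ≤ (m : WithBot ℕ) := by
  rcases eq_or_ne p 0 with h0 | h0
  · simp [h0]
  · rw [Polynomial.degree_eq_natDegree h0] at h ⊢
    exact_mod_cast Nat.lt_succ_iff.mp (by exact_mod_cast h)

lemma eq_zero_of_Δ_eq_zero {h : ℝ[X]} (hΔ : Δ h = 0) (h0 : h.eval 0 = 0) : h = 0 := by
  have hshift : ∀ x : ℝ, h.eval (x + 1) = h.eval x := by
    intro x
    have := congrArg (Polynomial.eval x) hΔ
    simpa [Δ, Polynomial.eval_comp, sub_eq_zero] using this
  have hnat : ∀ k : ℕ, h.eval (k : ℝ) = 0 := by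
    intro k
    induction k with
    | zero => simpa using h0
    | succ k ih => push_cast; rw [hshift]; exact ih
  apply Polynomial.eq_zero_of_infinite_isRoot
  apply Set.infinite_of_injective_forall_mem (f := fun k : ℕ => (k : ℝ))
    Nat.cast_injective
  intro k
  exact hnat k

lemma Δ_sum {ι : Type*} (s : Finset ι) (c : ι → ℝ) (b : ι → ℝ[X]) :
    Δ (∑ i ∈ s, c i • b i) = ∑ i ∈ s, c i • Δ (b i) := by
  simp only [Δ, finset_sum_comp, Polynomial.smul_comp, smul_sub]
  rw [← Finset.sum_sub_distrib]

lemma newton : ∀ m : ℕ, ∀ f : ℝ[X], f.degree < (m : WithBot ℕ) →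
    f = ∑ j ∈ Finset.range m, ((Δ^[j] f).eval 0) • bin j := by
  intro m
  induction m with
  | zero =>
    intro f hf
    have : f = 0 := by
      by_contra h0
      exact absurd (Polynomial.zero_le_degree_iff.mpr h0) (by simpa using hf.not_ge)
    simp [this]
  | succ m ih =>
    intro f hf
    set g := ∑ j ∈ Finset.range (m + 1), ((Δ^[j] f).eval 0) • bin j with hgdef
    have hΔf : (Δ f).degree < (m : WithBot ℕ) := by
      rcases eq_or_ne f 0 with h0 | h0
      · rw [h0]
        have hΔ0 : Δ (0 : ℝ[X]) = 0 := by simp [Δ]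
        rw [hΔ0, Polynomial.degree_zero]
        exact_mod_cast WithBot.bot_lt_coe m
      · exact lt_of_lt_of_le (degree_Δ_lt h0) (degree_le_of_lt_succ hf)
    have hΔg : Δ g = Δ f := by
      rw [hgdef, Δ_sum, Finset.sum_range_succ']
      simp only [Δ_bin_zero, smul_zero, add_zero, Δ_bin]
      calc ∑ x ∈ Finset.range m, ((Δ^[x + 1] f).eval 0) • bin x
          = ∑ x ∈ Finset.range m, ((Δ^[x] (Δ f)).eval 0) • bin x :=
            Finset.sum_congr rfl fun j _ => by rw [Function.iterate_succ_apply]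
        _ = Δ f := (ih (Δ f) hΔf).symm
    have hg0 : g.eval 0 = f.eval 0 := by
      rw [hgdef, Polynomial.eval_finset_sum]
      rw [Finset.sum_eq_single 0]
      · simp [bin_zero]
      · intro j _ hj
        obtain ⟨j', rfl⟩ := Nat.exists_eq_succ_of_ne_zero hj
        simp [Polynomial.eval_smul, bin_eval_zero_succ]
      · intro hmem
        exact absurd (Finset.mem_range.mpr (Nat.succ_pos m)) hmem
    have hsub : f - g = 0 := by
      apply eq_zero_of_Δ_eq_zero
      · have : Δ (f - g) = Δ f - Δ g := by
          simp only [Δ, Polynomial.sub_comp]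
          ring
        rw [this, hΔg, sub_self]
      · simp [hg0]
    exact sub_eq_zero.mp hsub
/- ## Phi maps Mp into Mp -/

lemma Phi_bin_mem (hγ : Phi n a (gam n) ∈ Mp) {j : ℕ} (hj : j ≤ n) :
    Phi n a (bin j) ∈ Mp := by
  rw [bin_eq hj, Phi_comp, Phi_Δ_iter]
  have h1 : Δ^[n - j] (Phi n a (gam n)) ∈ Mp := Mp_Δ_iter hγ (n - j)
  have := Mp_comp_int h1 (-(n : ℤ))
  simpa using this

lemma Phi_maps (hγ : Phi n a (gam n) ∈ Mp) {f : ℝ[X]} (hf : f ∈ Mp)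
    (hd : f.degree < ((n + 1 : ℕ) : WithBot ℕ)) : Phi n a f ∈ Mp := by
  have hrep := newton (n + 1) f hd
  rw [hrep, map_sum]
  apply Mp_sum
  intro j hj
  rw [LinearMap.map_smul]
  obtain ⟨z, hz⟩ : ∃ z : ℤ, (Δ^[j] f).eval 0 = (z : ℝ) := by
    have := Mp_Δ_iter hf j 0
    simpa using this
  rw [hz]
  exact Mp_zsmul (Phi_bin_mem hγ (Nat.lt_succ_iff.mp (Finset.mem_range.mp hj))) z

end S13

/-- Let `k = ⌊(n+1)/2⌋` and `a₁, …, a_k ∈ ℝ`. If `φ = exp(a₁·D + a₂·D³ + ⋯ + a_k·D^{2k-1})`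
maps the single polynomial `γ_n(t) = (t+1)(t+2)⋯(t+n)/n!` to an integer-valued
polynomial, then `φ` maps the whole lattice `M_n` bijectively onto itself.
(`γ_n` corresponds to the class of the structure sheaf `O` in `K₀(ℙ_n)`.) -/
theorem mapsTo_lattice_of_image_gamma_integral (n : ℕ) (a : Fin ((n + 1) / 2) → ℝ)
    (g : V n) (hg : (g : ℝ[X]) = gam n)
    (h : (expE n (∑ i : Fin ((n + 1) / 2), a i • (Dop n) ^ (2 * (i : ℕ) + 1))) g
      ∈ MsetV n) :
    Set.BijOn
      (⇑(expE n (∑ i : Fin ((n + 1) / 2), a i • (Dop n) ^ (2 * (i : ℕ) + 1))))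
      (MsetV n) (MsetV n) := by
  classical
  open S13 in
  set E := expE n (∑ i : Fin ((n + 1) / 2), a i • (Dop n) ^ (2 * (i : ℕ) + 1)) with hE
  have hcoe : ∀ f : V n, ((E f : ℝ[X])) = S13.Phi n a (f : ℝ[X]) := fun f => S13.coe_E f
  have hmem : ∀ f : V n, f ∈ MsetV n ↔ (f : ℝ[X]) ∈ S13.Mp := fun f => Iff.rfl
  have hdeg : ∀ f : V n, (f : ℝ[X]).degree < ((n + 1 : ℕ) : WithBot ℕ) := by
    intro f
    exact Polynomial.mem_degreeLT.mp f.2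
  have hγ : S13.Phi n a (gam n) ∈ S13.Mp := by
    rw [← hg, ← hcoe g]
    exact (hmem _).mp h
  have hMapsTo : Set.MapsTo (⇑E) (MsetV n) (MsetV n) := by
    intro f hf
    rw [hmem, hcoe]
    exact S13.Phi_maps hγ ((hmem f).mp hf) (hdeg f)
  refine ⟨hMapsTo, ?_, ?_⟩
  · -- InjOn
    intro f hf g' hg' hfg
    have hΦ : S13.Phi n a ((f : ℝ[X]) - (g' : ℝ[X])) = 0 := by
      rw [map_sub, ← hcoe, ← hcoe, hfg, sub_self]
    by_contra hne
    have hne' : (f : ℝ[X]) - (g' : ℝ[X]) ≠ 0 := by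
      intro h0
      exact hne (Subtype.ext (sub_eq_zero.mp h0))
    have h1 := S13.degree_Phi_sub_lt (a := a) hne'
    rw [hΦ, zero_sub, Polynomial.degree_neg] at h1
    exact lt_irrefl _ h1
  · -- SurjOn
    have key : ∀ m : ℕ, ∀ f : V n, f ∈ MsetV n → (f : ℝ[X]).degree < (m : WithBot ℕ) →
        ∃ g' : V n, g' ∈ MsetV n ∧ E g' = f := by
      intro m
      induction m with
      | zero =>
        intro f hf hd
        have : (f : ℝ[X]) = 0 := by
          by_contra h0
          exact absurd (Polynomial.zero_le_degree_iff.mpr h0) (by simpa using hd.not_ge)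
        refine ⟨0, fun m => ⟨0, by simp⟩, ?_⟩
        rw [map_zero]
        exact (Subtype.ext this).symm
      | succ m ih =>
        intro f hf hd
        set h1 : V n := E f - f with hh1
        have hh1coe : (h1 : ℝ[X]) = S13.Phi n a (f : ℝ[X]) - (f : ℝ[X]) := by
          rw [hh1]
          push_cast
          rw [hcoe]
        have hh1M : h1 ∈ MsetV n := by
          rw [hmem, hh1coe]
          exact S13.Mp_sub (S13.Phi_maps hγ ((hmem f).mp hf) (hdeg f)) ((hmem f).mp hf)
        have hh1d : (h1 : ℝ[X]).degree < (m : WithBot ℕ) := by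
          rw [hh1coe]
          rcases eq_or_ne (f : ℝ[X]) 0 with h0 | h0
          · rw [h0, map_zero, sub_zero, Polynomial.degree_zero]
            exact_mod_cast WithBot.bot_lt_coe m
          · exact lt_of_lt_of_le (S13.degree_Phi_sub_lt h0) (S13.degree_le_of_lt_succ hd)
        obtain ⟨g', hg'M, hg'E⟩ := ih h1 hh1M hh1d
        refine ⟨f - g', ?_, ?_⟩
        · rw [hmem]
          push_cast
          exact S13.Mp_sub ((hmem f).mp hf) ((hmem g').mp hg'M)
        · rw [map_sub, hg'E, hh1]
          abel
    intro f hf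
    obtain ⟨g', hg'M, hg'E⟩ := key (n + 1) f hf (hdeg f)
    exact ⟨g', hg'M, hg'E⟩
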